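/- Let u_1, u_2 ∈ Π with u_1u_2 in normal form (λ(u_1) + u_2 = V), and let x ∈ Π with λ(u_2) ⊋ x. Then there exists w ∈ Π with (u_2, x, λ(w)) ∈ T', and the word u_1w is in normal form, i.e., λ(u_1) + w = V. -/
import Mathlib


/-- An abstract finite projective geometry of dimension `n` with an involution `lam`
satisfying `lam (Π_i) = Π_{n+1-i}`, together with an Ã_n-triangle presentation `T`
compatible with `lam`, satisfying axioms (A)–(F) of Cartwright–Shapiro.
Here `T' = {(u,v,w) ∈ T : dim u + dim v + dim w = n+1}`. -/
structure TrianglePresentation (n : ℕ) (P : Type*) where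
  dim : P → ℕ
  incid : P → P → Prop
  lam : P → P
  T : P → P → P → Prop
  incid_symm : ∀ x y, incid x y → incid y x
  lam_invol : Function.Involutive lam
  dim_mem : ∀ x, 1 ≤ dim x ∧ dim x ≤ n
  lam_dim : ∀ x, dim (lam x) = n + 1 - dim x
  /-- Axiom (A): `(u,v,w) ∈ T` for some `w` iff `λ(u)` and `v` are distinct and incident. -/
  axiomA : ∀ u v, (∃ w, T u v w) ↔ (lam u ≠ v ∧ incid (lam u) v)
  /-- Axiom (B): cyclic invariance. -/
  axiomB : ∀ u v w, T u v w → T v w u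
  /-- Axiom (C): uniqueness of the third vertex. -/
  axiomC : ∀ u v w₁ w₂, T u v w₁ → T u v w₂ → w₁ = w₂
  /-- Axiom (D). -/
  axiomD : ∀ u v w, T u v w → T (lam w) (lam v) (lam u)
  /-- Axiom (E). -/
  axiomE : ∀ u v w, T u v w →
    dim u + dim v + dim w = n + 1 ∨ dim u + dim v + dim w = 2 * (n + 1)
  /-- Axiom (F), stated for the half `T'` of `T`. -/
  axiomF : ∀ x y u x' y',
    (T x y u ∧ dim x + dim y + dim u = n + 1) →
    (T x' y' (lam u) ∧ dim x' + dim y' + dim (lam u) = n + 1) →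
    ∃ w, (T y' x w ∧ dim y' + dim x + dim w = n + 1) ∧
         (T y x' (lam w) ∧ dim y + dim x' + dim (lam w) = n + 1)
  /-- For `u, v ∈ Π`, `(u,v,w) ∈ T'` for some `w` iff `λ(u) ⊋ v`. -/
  exists_T' : ∀ u v,
    (∃ w, T u v w ∧ dim u + dim v + dim w = n + 1) ↔
      (lam u ≠ v ∧ incid (lam u) v ∧ dim v < dim (lam u))

namespace TrianglePresentation

variable {n : ℕ} {P : Type*} (TP : TrianglePresentation n P)

/-- The half `T'` of `T` consisting of triples with dimension sum `n+1`. -/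
def T' (u v w : P) : Prop :=
  TP.T u v w ∧ TP.dim u + TP.dim v + TP.dim w = n + 1

/-- `T'' = T \ T'`. -/
def T'' (u v w : P) : Prop :=
  TP.T u v w ∧ ¬ (TP.dim u + TP.dim v + TP.dim w = n + 1)

/-- `x ⊂ y`: `x` is incident with `y` and `dim x ≤ dim y` (or `x = y`). -/
def Sub (x y : P) : Prop :=
  x = y ∨ (TP.incid x y ∧ TP.dim x ≤ TP.dim y)

/-- `x ⊊ y`: proper containment. -/
def PSub (x y : P) : Prop :=
  TP.Sub x y ∧ x ≠ y

/-- `x + y = V`: no element of `Π` contains both `x` and `y`. -/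
def SumV (x y : P) : Prop :=
  ¬ ∃ z, TP.Sub x z ∧ TP.Sub y z

/-- `x + y = c`: `c` is the join of `x` and `y` in the projective geometry. -/
def JoinEq (x y c : P) : Prop :=
  TP.Sub x c ∧ TP.Sub y c ∧ ∀ z, TP.Sub x z → TP.Sub y z → TP.Sub c z

end TrianglePresentation

namespace TrianglePresentation

variable {n : ℕ} {P : Type*} (TP : TrianglePresentation n P)

/-- If `a` and `b` are distinct incident elements with `dim a ≤ dim b`, then
`dim a < dim b`. -/
lemma dim_lt_of_incid {a b : P} (hinc : TP.incid a b) (hne : a ≠ b)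
    (hle : TP.dim a ≤ TP.dim b) : TP.dim a < TP.dim b := by
  rcases lt_or_eq_of_le hle with h | h
  · exact h
  · exfalso
    obtain ⟨w, hw⟩ := (TP.axiomA (TP.lam a) b).mpr
      ⟨by simpa [TP.lam_invol a] using hne, by simpa [TP.lam_invol a] using hinc⟩
    have hE := TP.axiomE _ _ _ hw
    have hd := TP.lam_dim a
    have h1 := TP.dim_mem a
    have h2 := TP.dim_mem b
    have h3 := TP.dim_mem w
    omega

/-- From a triple in `T'`, the middle vertex is properly contained in `λ` of the
first. -/
lemma psub_of_T'_aux {u v w : P} (h : TP.T u v w)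
    (hs : TP.dim u + TP.dim v + TP.dim w = n + 1) :
    TP.PSub v (TP.lam u) := by
  obtain ⟨hne, hinc, hlt⟩ := (TP.exists_T' u v).mp ⟨w, h, hs⟩
  exact ⟨Or.inr ⟨TP.incid_symm _ _ hinc, le_of_lt hlt⟩, fun e => hne e.symm⟩

/-- Transitivity of proper containment, derived from axiom (F). -/
lemma psub_trans {a b c : P} (hab : TP.PSub a b) (hbc : TP.PSub b c) :
    TP.PSub a c := by
  obtain ⟨hab', hne_ab⟩ := hab
  obtain ⟨hbc', hne_bc⟩ := hbc
  rcases hab' with rfl | ⟨hinc_ab, hle_ab⟩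
  · exact absurd rfl hne_ab
  rcases hbc' with rfl | ⟨hinc_bc, hle_bc⟩
  · exact absurd rfl hne_bc
  have hlt_ab := TP.dim_lt_of_incid hinc_ab hne_ab hle_ab
  have hlt_bc := TP.dim_lt_of_incid hinc_bc hne_bc hle_bc
  -- T' (λ b) a p
  obtain ⟨p, hp, hps⟩ := (TP.exists_T' (TP.lam b) a).mpr
    ⟨by simpa [TP.lam_invol b] using hne_ab.symm,
     by simpa [TP.lam_invol b] using TP.incid_symm _ _ hinc_ab,
     by simpa [TP.lam_invol b] using hlt_ab⟩
  -- T' (λ c) b q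
  obtain ⟨q, hq, hqs⟩ := (TP.exists_T' (TP.lam c) b).mpr
    ⟨by simpa [TP.lam_invol c] using hne_bc.symm,
     by simpa [TP.lam_invol c] using TP.incid_symm _ _ hinc_bc,
     by simpa [TP.lam_invol c] using hlt_bc⟩
  -- cyclic shifts
  have h1 : TP.T a p (TP.lam b) := TP.axiomB _ _ _ hp
  have h2 : TP.T q (TP.lam c) b := TP.axiomB _ _ _ (TP.axiomB _ _ _ hq)
  have h2' : TP.T q (TP.lam c) (TP.lam (TP.lam b)) := by rw [TP.lam_invol b]; exact h2
  obtain ⟨w, ⟨hw1, hw1s⟩, _⟩ := TP.axiomF a p (TP.lam b) q (TP.lam c)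
    ⟨h1, by omega⟩ ⟨h2', by rw [TP.lam_invol b]; omega⟩
  have := TP.psub_of_T'_aux hw1 hw1s
  rwa [TP.lam_invol c] at this

end TrianglePresentation

/-- Lemma 2, case (3): if `u₁u₂` is in normal form (`λ(u₁) + u₂ = V`) and
`λ(u₂) ⊋ x`, then `(u₂, x, λ(w)) ∈ T'` for some `w`, and `u₁w` is in normal form
(`λ(u₁) + w = V`). -/
theorem lemma2_case3 {n : ℕ} {P : Type*} (TP : TrianglePresentation n P)
    (u₁ u₂ x : P)
    (hnf : TP.SumV (TP.lam u₁) u₂)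
    (hx : TP.PSub x (TP.lam u₂)) :
    ∃ w, TP.T' u₂ x (TP.lam w) ∧ TP.SumV (TP.lam u₁) w := by
  obtain ⟨hsub, hne⟩ := hx
  rcases hsub with rfl | ⟨hinc, hle⟩
  · exact absurd rfl hne
  have hlt := TP.dim_lt_of_incid hinc hne hle
  obtain ⟨w₀, hw₀, hw₀s⟩ := (TP.exists_T' u₂ x).mpr
    ⟨fun e => hne e.symm, TP.incid_symm _ _ hinc, hlt⟩
  refine ⟨TP.lam w₀, ⟨by rw [TP.lam_invol w₀]; exact hw₀,
    by rw [TP.lam_invol w₀]; exact hw₀s⟩, ?_⟩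
  rintro ⟨z, hz1, hz2⟩
  -- u₂ ⊊ λ w₀
  have hcyc : TP.T w₀ u₂ x := TP.axiomB _ _ _ (TP.axiomB _ _ _ hw₀)
  have hpsub : TP.PSub u₂ (TP.lam w₀) := TP.psub_of_T'_aux hcyc (by omega)
  have hsub2 : TP.Sub u₂ z := by
    by_cases hzz : TP.lam w₀ = z
    · rw [← hzz]; exact hpsub.1
    · exact (TP.psub_trans hpsub ⟨hz2, hzz⟩).1
  exact hnf ⟨z, hz1, hsub2⟩
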